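/- Define J(ω, T) = ∫₀^T (cos(2t) − cos(ωt))² dt for ω ∈ ℝ and T > 0. If ω₁ ∉ {0, 2, −2} and ω₂ ∉ {0, 2, −2}, then J(ω₁, T)/J(ω₂, T) → 1 as T → ∞; that is, the least squares objective asymptotically fails to distinguish between any two incorrect frequencies, no matter how close one of them is to the true frequency. -/

import Mathlib

open Real Filter

lemma misfit_aux (ω : ℝ) (h0 : ω ≠ 0) (h2 : ω ≠ 2) (h2' : ω ≠ -2) :
    Tendsto (fun T : ℝ =>
        (∫ t in (0 : ℝ)..T, (Real.cos (2 * t) - Real.cos (ω * t)) ^ 2) / T)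
      atTop (nhds 1) := by
  have hp : (2 : ℝ) + ω ≠ 0 := by intro h; apply h2'; linarith
  have hm : (2 : ℝ) - ω ≠ 0 := by intro h; apply h2; linarith
  set F : ℝ → ℝ := fun t => t + Real.sin (4*t)/8 + Real.sin (2*ω*t)/(4*ω)
      - Real.sin ((2+ω)*t)/(2+ω) - Real.sin ((2-ω)*t)/(2-ω) with hF
  have hderiv : ∀ t : ℝ, HasDerivAt F ((Real.cos (2*t) - Real.cos (ω*t))^2) t := by
    intro t
    have hs : ∀ c : ℝ, HasDerivAt (fun t => Real.sin (c*t)) (Real.cos (c*t) * c) t := by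
      intro c
      simpa [Function.comp_def] using (Real.hasDerivAt_sin (c*t)).comp t ((hasDerivAt_id t).const_mul c)
    have hD : HasDerivAt F
        (1 + Real.cos (4*t)*4/8 + Real.cos (2*ω*t)*(2*ω)/(4*ω)
          - Real.cos ((2+ω)*t)*(2+ω)/(2+ω) - Real.cos ((2-ω)*t)*(2-ω)/(2-ω)) t := by
      exact (((((hasDerivAt_id t).add ((hs 4).div_const 8)).add
        (((hs (2*ω)).div_const (4*ω)))).sub ((hs (2+ω)).div_const (2+ω))).sub
        ((hs (2-ω)).div_const (2-ω)))
    convert hD using 1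
    have e1 : Real.cos (4*t) = 2 * Real.cos (2*t)^2 - 1 := by
      have := Real.cos_two_mul (2*t); rw [← this]; ring_nf
    have e2 : Real.cos (2*ω*t) = 2 * Real.cos (ω*t)^2 - 1 := by
      have := Real.cos_two_mul (ω*t); rw [← this]; ring_nf
    have e3 : Real.cos ((2+ω)*t) = Real.cos (2*t) * Real.cos (ω*t) - Real.sin (2*t) * Real.sin (ω*t) := by
      rw [show (2+ω)*t = 2*t + ω*t by ring, Real.cos_add]
    have e4 : Real.cos ((2-ω)*t) = Real.cos (2*t) * Real.cos (ω*t) + Real.sin (2*t) * Real.sin (ω*t) := by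
      rw [show (2-ω)*t = 2*t - ω*t by ring, Real.cos_sub]
    rw [e1, e2, e3, e4]
    field_simp
    ring
  have hint : ∀ T : ℝ, (∫ t in (0 : ℝ)..T, (Real.cos (2 * t) - Real.cos (ω * t)) ^ 2) = F T - F 0 := by
    intro T
    refine intervalIntegral.integral_eq_sub_of_hasDerivAt (fun t _ => hderiv t) ?_
    apply Continuous.intervalIntegrable
    continuity
  have hF0 : F 0 = 0 := by simp [hF]
  -- remainder bound
  set r : ℝ → ℝ := fun T => Real.sin (4*T)/8 + Real.sin (2*ω*T)/(4*ω)
      - Real.sin ((2+ω)*T)/(2+ω) - Real.sin ((2-ω)*T)/(2-ω) with hr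
  have hbound : ∀ T : ℝ, |r T| ≤ 1/8 + 1/|4*ω| + 1/|2+ω| + 1/|2-ω| := by
    intro T
    have b : ∀ (x c : ℝ), c ≠ 0 → |Real.sin x / c| ≤ 1 / |c| := by
      intro x c hc
      rw [abs_div]
      gcongr
      exact Real.abs_sin_le_one x
    have b1 := b (4*T) 8 (by norm_num)
    have b2 := b (2*ω*T) (4*ω) (by simpa using h0)
    have b3 := b ((2+ω)*T) (2+ω) hp
    have b4 := b ((2-ω)*T) (2-ω) hm
    calc |r T| ≤ |Real.sin (4*T)/8| + |Real.sin (2*ω*T)/(4*ω)|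
        + |Real.sin ((2+ω)*T)/(2+ω)| + |Real.sin ((2-ω)*T)/(2-ω)| := by
          simp only [hr]
          exact (abs_sub _ _).trans (by
            gcongr
            exact (abs_sub _ _).trans (by gcongr; exact abs_add_le _ _))
      _ ≤ 1/8 + 1/|4*ω| + 1/|2+ω| + 1/|2-ω| := by
          rw [show |(8:ℝ)| = 8 from by norm_num] at b1
          linarith
  have hr0 : Tendsto (fun T => r T / T) atTop (nhds 0) := by
    refine squeeze_zero_norm' (a := fun T => (1/8 + 1/|4*ω| + 1/|2+ω| + 1/|2-ω|) / T) ?_ ?_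
    · filter_upwards [eventually_gt_atTop (0:ℝ)] with T hT
      rw [norm_div, Real.norm_eq_abs, Real.norm_eq_abs, abs_of_pos hT]
      gcongr
      exact hbound T
    · simpa using tendsto_const_nhds.div_atTop tendsto_id
  have key : Tendsto (fun T : ℝ => 1 + r T / T) atTop (nhds 1) := by
    simpa using tendsto_const_nhds.add hr0
  apply key.congr'
  filter_upwards [eventually_gt_atTop (0:ℝ)] with T hT
  rw [hint, hF0, sub_zero]
  have : F T = T + r T := by simp [hF, hr]; ring
  rw [this, add_div, div_self hT.ne']

/-- For the least squares misfit `J(ω, T) = ∫₀^T (cos 2t − cos ωt)² dt`, if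
`ω₁ ∉ {0, 2, −2}` and `ω₂ ∉ {0, 2, −2}` then `J(ω₁, T)/J(ω₂, T) → 1` as `T → ∞`:
the objective asymptotically fails to distinguish any two incorrect frequencies. -/
theorem least_squares_misfit_ratio_tendsto_one
    (ω₁ ω₂ : ℝ) (hω₁ : ω₁ ∉ ({0, 2, -2} : Set ℝ)) (hω₂ : ω₂ ∉ ({0, 2, -2} : Set ℝ)) :
    Tendsto (fun T : ℝ =>
        (∫ t in (0 : ℝ)..T, (Real.cos (2 * t) - Real.cos (ω₁ * t)) ^ 2) /
        (∫ t in (0 : ℝ)..T, (Real.cos (2 * t) - Real.cos (ω₂ * t)) ^ 2))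
      atTop (nhds 1) := by
  simp only [Set.mem_insert_iff, Set.mem_singleton_iff, not_or] at hω₁ hω₂
  have h1 := misfit_aux ω₁ hω₁.1 hω₁.2.1 hω₁.2.2
  have h2 := misfit_aux ω₂ hω₂.1 hω₂.2.1 hω₂.2.2
  have := h1.div h2 one_ne_zero
  rw [div_one] at this
  apply this.congr'
  filter_upwards [eventually_gt_atTop (0:ℝ)] with T hT
  simp only [Pi.div_apply]
  rw [div_div_div_cancel_right₀]
  exact hT.ne'
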